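/- Let n ≥ 1 and consider the classical Heisenberg vector fields on ℝ^{2n+1} given by X_j f = ∂f/∂x_j − (1/2) x_{j+n} ∂f/∂t for 1 ≤ j ≤ n and X_j f = ∂f/∂x_j + (1/2) x_{j−n} ∂f/∂t for n+1 ≤ j ≤ 2n (so that [X_j, X_{j+n}] = ∂/∂t and the frame is orthonormal). Define the Kaplan-type gauge ρ(x_1,…,x_{2n},t) = ( (Σ_{j=1}^{2n} x_j²)² + 16 t² )^{1/4}. Then ρ satisfies the infinite Laplace equation Δ_∞ ρ = Σ_{i=1}^{2n} Σ_{j=1}^{2n} X_i(X_j ρ) · X_i ρ · X_j ρ = 0 at every point of ℝ^{2n+1} \ {0}. -/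

import Mathlib

/-- Partial derivative of `f : ℝ^m → ℝ` in the `i`-th coordinate direction. -/
noncomputable def pderiv' {m : ℕ} (i : Fin m) (f : (Fin m → ℝ) → ℝ) (q : Fin m → ℝ) : ℝ :=
  fderiv ℝ f q (Pi.single i 1)

/-- The classical Heisenberg vector fields on ℝ^{2n+1}:
`X_j f = ∂f/∂x_j − (1/2) x_{j+n} ∂f/∂t` for `1 ≤ j ≤ n`, and
`X_j f = ∂f/∂x_j + (1/2) x_{j−n} ∂f/∂t` for `n+1 ≤ j ≤ 2n`. -/
noncomputable def Xh (n : ℕ) (j : Fin (2*n))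
    (f : (Fin (2*n+1) → ℝ) → ℝ) (q : Fin (2*n+1) → ℝ) : ℝ :=
  pderiv' ⟨(j : ℕ), by have := j.isLt; omega⟩ f q +
    (if h : (j : ℕ) < n then
        -(1/2) * q ⟨(j : ℕ) + n, by have := j.isLt; omega⟩
      else
        (1/2) * q ⟨(j : ℕ) - n, by have := j.isLt; omega⟩) *
      pderiv' ⟨2*n, by omega⟩ f q

/-- The Kaplan-type gauge `ρ = ((Σ_{j=1}^{2n} x_j²)² + 16 t²)^{1/4}`. -/
noncomputable def rhoH (n : ℕ) (q : Fin (2*n+1) → ℝ) : ℝ :=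
  ((∑ j : Fin (2*n), (q ⟨(j : ℕ), by have := j.isLt; omega⟩)^2)^2
    + 16 * (q ⟨2*n, by omega⟩)^2) ^ ((1:ℝ)/4)

namespace HeisAux

variable (n : ℕ)

abbrev emb (j : Fin (2*n)) : Fin (2*n+1) := ⟨(j : ℕ), by have := j.isLt; omega⟩
abbrev tI : Fin (2*n+1) := ⟨2*n, by omega⟩

noncomputable def S (q : Fin (2*n+1) → ℝ) : ℝ := ∑ j : Fin (2*n), (q (emb n j))^2
noncomputable def T (q : Fin (2*n+1) → ℝ) : ℝ := q (tI n)
noncomputable def U (q : Fin (2*n+1) → ℝ) : ℝ := (S n q)^2 + 16 * (T n q)^2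
noncomputable def A (j : Fin (2*n)) (q : Fin (2*n+1) → ℝ) : ℝ :=
  if h : (j : ℕ) < n then -(1/2) * q ⟨(j : ℕ) + n, by have := j.isLt; omega⟩
  else (1/2) * q ⟨(j : ℕ) - n, by have := j.isLt; omega⟩
noncomputable def P (j : Fin (2*n)) (q : Fin (2*n+1) → ℝ) : ℝ :=
  S n q * q (emb n j) + 8 * T n q * A n j q
noncomputable def G (j : Fin (2*n)) (q : Fin (2*n+1) → ℝ) : ℝ :=
  U n q ^ (-(3/4) : ℝ) * P n j q

lemma rhoH_eq : rhoH n = fun q => U n q ^ ((1:ℝ)/4) := rfl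

lemma Xh_eq (j : Fin (2*n)) (f : (Fin (2*n+1) → ℝ) → ℝ) (q : Fin (2*n+1) → ℝ) :
    Xh n j f q = pderiv' (emb n j) f q + A n j q * pderiv' (tI n) f q := rfl

abbrev pr (k : Fin (2*n+1)) : (Fin (2*n+1) → ℝ) →L[ℝ] ℝ :=
  ContinuousLinearMap.proj k

noncomputable def LS (q : Fin (2*n+1) → ℝ) : (Fin (2*n+1) → ℝ) →L[ℝ] ℝ :=
  ∑ j : Fin (2*n), (2 * q (emb n j)) • pr n (emb n j)

noncomputable def LU (q : Fin (2*n+1) → ℝ) : (Fin (2*n+1) → ℝ) →L[ℝ] ℝ :=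
  (2 * S n q) • LS n q + (32 * T n q) • pr n (tI n)

noncomputable def LA (j : Fin (2*n)) : (Fin (2*n+1) → ℝ) →L[ℝ] ℝ :=
  if h : (j : ℕ) < n then (-(1/2) : ℝ) • pr n ⟨(j : ℕ) + n, by have := j.isLt; omega⟩
  else ((1/2) : ℝ) • pr n ⟨(j : ℕ) - n, by have := j.isLt; omega⟩

noncomputable def LP (j : Fin (2*n)) (q : Fin (2*n+1) → ℝ) : (Fin (2*n+1) → ℝ) →L[ℝ] ℝ :=
  q (emb n j) • LS n q + S n q • pr n (emb n j) + (8 * A n j q) • pr n (tI n)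
    + (8 * T n q) • LA n j

noncomputable def LG (j : Fin (2*n)) (q : Fin (2*n+1) → ℝ) : (Fin (2*n+1) → ℝ) →L[ℝ] ℝ :=
  (P n j q * (-(3/4) * U n q ^ ((-(3/4) : ℝ) - 1))) • LU n q
    + (U n q ^ (-(3/4) : ℝ)) • LP n j q

lemma hS (q : Fin (2*n+1) → ℝ) : HasFDerivAt (S n) (LS n q) q := by
  refine HasFDerivAt.fun_sum fun j _ => ?_
  have h0 := hasFDerivAt_apply (𝕜 := ℝ) (emb n j) q
  have h : HasFDerivAt (fun y : Fin (2*n+1) → ℝ => y (emb n j) * y (emb n j)) _ q := h0.mul h0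
  have hfun : (fun y : Fin (2*n+1) → ℝ => y (emb n j) ^ 2)
      = fun y => y (emb n j) * y (emb n j) := funext fun y => sq (y (emb n j))
  rw [hfun]
  refine h.congr_fderiv ?_
  ext v
  simp
  ring

lemma hT (q : Fin (2*n+1) → ℝ) : HasFDerivAt (T n) (pr n (tI n)) q :=
  hasFDerivAt_apply (𝕜 := ℝ) (tI n) q

lemma hU (q : Fin (2*n+1) → ℝ) : HasFDerivAt (U n) (LU n q) q := by
  have h1 := (hS n q).mul (hS n q)
  have h2 := (((hT n q).mul (hT n q)).const_mul (16 : ℝ))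
  have h : HasFDerivAt (fun q => S n q * S n q + 16 * (T n q * T n q)) _ q := h1.add h2
  have hfun : U n = fun q => S n q * S n q + 16 * (T n q * T n q) :=
    funext fun q => by simp [U]; ring
  rw [hfun]
  refine h.congr_fderiv ?_
  ext v
  simp [LU]
  ring

lemma hA (j : Fin (2*n)) (q : Fin (2*n+1) → ℝ) : HasFDerivAt (A n j) (LA n j) q := by
  by_cases h : (j : ℕ) < n
  · have hfun : A n j = fun q : Fin (2*n+1) → ℝ =>
        -(1/2) * q ⟨(j : ℕ) + n, by have := j.isLt; omega⟩ := funext fun q => by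
      simp [A, h]
    rw [hfun]
    unfold LA
    rw [dif_pos h]
    exact (hasFDerivAt_apply (𝕜 := ℝ) _ q).const_mul _
  · have hfun : A n j = fun q : Fin (2*n+1) → ℝ =>
        (1/2) * q ⟨(j : ℕ) - n, by have := j.isLt; omega⟩ := funext fun q => by
      simp [A, h]
    rw [hfun]
    unfold LA
    rw [dif_neg h]
    exact (hasFDerivAt_apply (𝕜 := ℝ) _ q).const_mul _

lemma hP (j : Fin (2*n)) (q : Fin (2*n+1) → ℝ) : HasFDerivAt (P n j) (LP n j q) q := by
  have h1 := (hS n q).mul (hasFDerivAt_apply (𝕜 := ℝ) (emb n j) q)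
  have h2 := (((hT n q).const_mul (8:ℝ)).mul (hA n j q))
  have h : HasFDerivAt (P n j) _ q := h1.add h2
  refine h.congr_fderiv ?_
  ext v
  simp [LP]
  ring

lemma hG (j : Fin (2*n)) (q : Fin (2*n+1) → ℝ) (hu : U n q ≠ 0) :
    HasFDerivAt (G n j) (LG n j q) q := by
  have h1 := (hU n q).rpow_const (p := (-(3/4) : ℝ)) (Or.inl hu)
  have h : HasFDerivAt (G n j) _ q := h1.mul (hP n j q)
  refine h.congr_fderiv ?_
  ext v
  simp [LG]
  ring


noncomputable def la (i j : Fin (2*n)) : ℝ :=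
  if h : (j : ℕ) < n then (if (i : ℕ) = (j : ℕ) + n then -(1/2) else 0)
  else (if (i : ℕ) = (j : ℕ) - n then (1/2) else 0)

lemma pr_single (k i : Fin (2*n+1)) :
    pr n k (Pi.single i 1) = if (k : ℕ) = (i : ℕ) then 1 else 0 := by
  simp [Pi.single_apply, Fin.ext_iff]

lemma LS_single_emb (q : Fin (2*n+1) → ℝ) (i : Fin (2*n)) :
    LS n q (Pi.single (emb n i) 1) = 2 * q (emb n i) := by
  simp only [LS, ContinuousLinearMap.sum_apply, ContinuousLinearMap.smul_apply,
    pr_single, smul_eq_mul]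
  have : ∀ j : Fin (2*n), ((emb n j : ℕ) = ((emb n i : ℕ))) = (j = i) := fun j => by
    simp [Fin.ext_iff]
  simp only [this]
  simp

lemma LS_single_t (q : Fin (2*n+1) → ℝ) :
    LS n q (Pi.single (tI n) 1) = 0 := by
  simp only [LS, ContinuousLinearMap.sum_apply, ContinuousLinearMap.smul_apply,
    pr_single, smul_eq_mul]
  refine Finset.sum_eq_zero fun j _ => ?_
  have : ¬ ((emb n j : ℕ) = ((tI n : ℕ))) := by
    have := j.isLt; simp; omega
  simp [this]

lemma LU_single_emb (q : Fin (2*n+1) → ℝ) (i : Fin (2*n)) :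
    LU n q (Pi.single (emb n i) 1) = 4 * S n q * q (emb n i) := by
  have hne : ¬ ((tI n : ℕ) = ((emb n i : ℕ))) := by
    have := i.isLt; simp; omega
  simp [LU, LS_single_emb, pr_single, hne]
  ring

lemma LU_single_t (q : Fin (2*n+1) → ℝ) :
    LU n q (Pi.single (tI n) 1) = 32 * T n q := by
  simp [LU, LS_single_t, pr_single]

lemma LA_single_emb (i j : Fin (2*n)) :
    LA n j (Pi.single (emb n i) 1) = la n i j := by
  by_cases h : (j : ℕ) < n
  · unfold LA la
    rw [dif_pos h, dif_pos h]
    simp only [ContinuousLinearMap.smul_apply, pr_single, smul_eq_mul]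
    by_cases hij : (i : ℕ) = (j : ℕ) + n
    · rw [if_pos hij.symm, if_pos hij]; ring
    · rw [if_neg (fun hh => hij hh.symm), if_neg hij]; ring
  · unfold LA la
    rw [dif_neg h, dif_neg h]
    simp only [ContinuousLinearMap.smul_apply, pr_single, smul_eq_mul]
    by_cases hij : (i : ℕ) = (j : ℕ) - n
    · rw [if_pos hij.symm, if_pos hij]; ring
    · rw [if_neg (fun hh => hij hh.symm), if_neg hij]; ring

lemma LA_single_t (j : Fin (2*n)) :
    LA n j (Pi.single (tI n) 1) = 0 := by
  have hj := j.isLt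
  by_cases h : (j : ℕ) < n
  · unfold LA
    rw [dif_pos h]
    simp only [ContinuousLinearMap.smul_apply, pr_single, smul_eq_mul]
    rw [if_neg (by omega)]
    ring
  · unfold LA
    rw [dif_neg h]
    simp only [ContinuousLinearMap.smul_apply, pr_single, smul_eq_mul]
    rw [if_neg (by omega)]
    ring

lemma LP_single_emb (q : Fin (2*n+1) → ℝ) (i j : Fin (2*n)) :
    LP n j q (Pi.single (emb n i) 1)
      = 2 * q (emb n i) * q (emb n j) + (if i = j then S n q else 0)
        + 8 * T n q * la n i j := by
  have hne : ¬ ((tI n : ℕ) = ((emb n i : ℕ))) := by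
    have := i.isLt; simp; omega
  have hd : ((emb n j : ℕ) = ((emb n i : ℕ))) ↔ (i = j) := by
    simp [Fin.ext_iff]; omega
  simp only [LP, ContinuousLinearMap.add_apply, ContinuousLinearMap.smul_apply,
    LS_single_emb, pr_single, LA_single_emb, smul_eq_mul]
  rw [if_neg hne]
  by_cases hij : i = j
  · rw [if_pos (hd.mpr hij), if_pos hij]; ring
  · rw [if_neg (fun hh => hij (hd.mp hh)), if_neg hij]; ring

lemma LP_single_t (q : Fin (2*n+1) → ℝ) (j : Fin (2*n)) :
    LP n j q (Pi.single (tI n) 1) = 8 * A n j q := by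
  have hne : ¬ ((emb n j : ℕ) = ((tI n : ℕ))) := by
    have := j.isLt; simp; omega
  simp only [LP, ContinuousLinearMap.add_apply, ContinuousLinearMap.smul_apply,
    LS_single_t, pr_single, LA_single_t, smul_eq_mul]
  rw [if_neg hne]
  simp


lemma pderiv_of {f : (Fin (2*n+1) → ℝ) → ℝ} {L : (Fin (2*n+1) → ℝ) →L[ℝ] ℝ}
    {q : Fin (2*n+1) → ℝ} (h : HasFDerivAt f L q) (k : Fin (2*n+1)) :
    pderiv' k f q = L (Pi.single k 1) := by
  unfold pderiv'
  rw [h.fderiv]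

lemma Xh_rho (j : Fin (2*n)) (q : Fin (2*n+1) → ℝ) (hu : U n q ≠ 0) :
    Xh n j (rhoH n) q = G n j q := by
  have hρ := (hU n q).rpow_const (p := (1:ℝ)/4) (Or.inl hu)
  rw [rhoH_eq, Xh_eq, pderiv_of n hρ, pderiv_of n hρ]
  simp only [ContinuousLinearMap.smul_apply, smul_eq_mul, LU_single_emb, LU_single_t]
  rw [show ((1:ℝ)/4 - 1) = (-(3/4) : ℝ) by norm_num]
  unfold G P
  ring

lemma Xh_G (i j : Fin (2*n)) (q : Fin (2*n+1) → ℝ) (hu : U n q ≠ 0) :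
    Xh n i (G n j) q
      = -3 * U n q ^ (-(7/4) : ℝ) * P n i q * P n j q
        + U n q ^ (-(3/4) : ℝ) * (2 * q (emb n i) * q (emb n j)
            + (if i = j then S n q else 0) + 8 * T n q * la n i j
            + 8 * A n i q * A n j q) := by
  rw [Xh_eq, pderiv_of n (hG n j q hu), pderiv_of n (hG n j q hu)]
  simp only [LG, ContinuousLinearMap.add_apply, ContinuousLinearMap.smul_apply,
    smul_eq_mul, LU_single_emb, LU_single_t, LP_single_emb, LP_single_t]
  rw [show ((-(3/4) : ℝ) - 1) = (-(7/4) : ℝ) by norm_num]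
  unfold P
  ring

lemma contU : Continuous (U n) := by
  have h1 : Continuous (S n) := continuous_finset_sum _ fun j _ => (continuous_apply _).pow 2
  have h2 : Continuous (T n) := continuous_apply _
  exact (h1.pow 2).add (continuous_const.mul (h2.pow 2))

lemma Xh_Xh_rho (i j : Fin (2*n)) (q : Fin (2*n+1) → ℝ) (hu : 0 < U n q) :
    Xh n i (Xh n j (rhoH n)) q = Xh n i (G n j) q := by
  have hopen : IsOpen {q' : Fin (2*n+1) → ℝ | 0 < U n q'} :=
    isOpen_lt continuous_const (contU n)
  have hev : Xh n j (rhoH n) =ᶠ[nhds q] G n j :=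
    Filter.eventually_of_mem (hopen.mem_nhds hu) fun q' hq' => Xh_rho n j q' (ne_of_gt hq')
  rw [Xh_eq, Xh_eq]
  unfold pderiv'
  rw [hev.fderiv_eq]


lemma sum_pairs (f : Fin (2*n) → ℝ) :
    ∑ i : Fin (2*n), f i
      = ∑ i : Fin n, (f ⟨(i : ℕ), by have := i.isLt; omega⟩
          + f ⟨(i : ℕ) + n, by have := i.isLt; omega⟩) := by
  classical
  set g : ℕ → ℝ := fun k => if h : k < 2*n then f ⟨k, h⟩ else 0 with hg
  have h1 : ∑ i : Fin (2*n), f i = ∑ k ∈ Finset.range (2*n), g k := by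
    rw [← Fin.sum_univ_eq_sum_range]
    refine Finset.sum_congr rfl fun i _ => ?_
    simp only [hg, i.isLt, dif_pos]
  have h2 : ∑ k ∈ Finset.range (2*n), g k
      = ∑ k ∈ Finset.range n, g k + ∑ k ∈ Finset.range n, g (n + k) := by
    rw [show 2*n = n + n by ring]
    rw [← Finset.sum_range_add_sum_Ico g (Nat.le_add_right n n)]
    congr 1
    rw [Finset.sum_Ico_eq_sum_range]
    simp
  rw [h1, h2, Finset.sum_add_distrib]
  congr 1
  · rw [← Fin.sum_univ_eq_sum_range]
    refine Finset.sum_congr rfl fun i _ => ?_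
    have hi : (i : ℕ) < 2*n := by have := i.isLt; omega
    simp only [hg, hi, dif_pos]
  · rw [← Fin.sum_univ_eq_sum_range]
    refine Finset.sum_congr rfl fun i _ => ?_
    have hi : n + (i : ℕ) < 2*n := by have := i.isLt; omega
    simp only [hg, hi, dif_pos]
    congr 1
    exact Fin.ext (Nat.add_comm n i)

lemma A_L (q : Fin (2*n+1) → ℝ) (i : Fin n) :
    A n ⟨(i : ℕ), by have := i.isLt; omega⟩ q
      = -(1/2) * q (emb n ⟨(i : ℕ) + n, by have := i.isLt; omega⟩) := by
  unfold A
  rw [dif_pos (show ((⟨(i : ℕ), by have := i.isLt; omega⟩ : Fin (2*n)) : ℕ) < n from i.isLt)]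

lemma A_R (q : Fin (2*n+1) → ℝ) (i : Fin n) :
    A n ⟨(i : ℕ) + n, by have := i.isLt; omega⟩ q
      = (1/2) * q (emb n ⟨(i : ℕ), by have := i.isLt; omega⟩) := by
  unfold A
  rw [dif_neg (show ¬((i : ℕ) + n < n) by omega)]
  simp

lemma sum_xA (q : Fin (2*n+1) → ℝ) :
    ∑ i : Fin (2*n), q (emb n i) * A n i q = 0 := by
  rw [sum_pairs]
  refine Finset.sum_eq_zero fun i _ => ?_
  rw [A_L, A_R]
  ring

lemma sum_sq (q : Fin (2*n+1) → ℝ) :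
    ∑ i : Fin (2*n), q (emb n i) * q (emb n i) = S n q := by
  unfold S
  exact Finset.sum_congr rfl fun i _ => (sq _).symm

lemma sum_AA (q : Fin (2*n+1) → ℝ) :
    ∑ i : Fin (2*n), A n i q * A n i q
      = (1/4) * ∑ i : Fin (2*n), q (emb n i) * q (emb n i) := by
  rw [Finset.mul_sum]
  rw [sum_pairs n (fun i => A n i q * A n i q),
    sum_pairs n (fun i => 1/4 * (q (emb n i) * q (emb n i)))]
  refine Finset.sum_congr rfl fun i _ => ?_
  rw [A_L, A_R]
  ring

lemma sum_ite_val (m : ℕ) (k : Fin (2*n)) (hk : (k : ℕ) = m) (c : ℝ) (f : Fin (2*n) → ℝ) :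
    ∑ j : Fin (2*n), (if (j : ℕ) = m then c else 0) * f j = c * f k := by
  rw [Finset.sum_eq_single k]
  · rw [if_pos hk]
  · intro b _ hb
    rw [if_neg (fun hh => hb (Fin.ext (by omega))), zero_mul]
  · intro hk'
    exact absurd (Finset.mem_univ k) hk'

lemma sum_la_right (i : Fin (2*n)) (f : Fin (2*n) → ℝ) :
    ∑ j : Fin (2*n), la n i j * f j
      = if h : (i : ℕ) < n then (1/2) * f ⟨(i : ℕ) + n, by have := i.isLt; omega⟩
        else -(1/2) * f ⟨(i : ℕ) - n, by have := i.isLt; omega⟩ := by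
  have hi := i.isLt
  by_cases h : (i : ℕ) < n
  · rw [dif_pos h]
    have key : ∀ j : Fin (2*n), la n i j = if (j : ℕ) = (i : ℕ) + n then (1/2 : ℝ) else 0 := by
      intro j
      have hj' := j.isLt
      unfold la
      by_cases hj : (j : ℕ) < n
      · rw [dif_pos hj, if_neg (by omega), if_neg (by omega)]
      · rw [dif_neg hj]
        by_cases hji : (i : ℕ) = (j : ℕ) - n
        · rw [if_pos hji, if_pos (by omega)]
        · rw [if_neg hji, if_neg (by omega)]
    simp only [key]
    exact sum_ite_val n ((i : ℕ) + n) ⟨(i : ℕ) + n, by omega⟩ rfl (1/2) f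
  · rw [dif_neg h]
    have key : ∀ j : Fin (2*n), la n i j = if (j : ℕ) = (i : ℕ) - n then (-(1/2) : ℝ) else 0 := by
      intro j
      have hj' := j.isLt
      unfold la
      by_cases hj : (j : ℕ) < n
      · rw [dif_pos hj]
        by_cases hji : (i : ℕ) = (j : ℕ) + n
        · rw [if_pos hji, if_pos (by omega)]
        · rw [if_neg hji, if_neg (by omega)]
      · rw [dif_neg hj, if_neg (by omega), if_neg (by omega)]
    simp only [key]
    exact sum_ite_val n ((i : ℕ) - n) ⟨(i : ℕ) - n, by omega⟩ rfl (-(1/2)) f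

lemma sum_sum_la (q : Fin (2*n+1) → ℝ) :
    ∑ i : Fin (2*n), (∑ j : Fin (2*n), la n i j * P n j q) * P n i q = 0 := by
  have key : ∀ i : Fin (2*n), (∑ j : Fin (2*n), la n i j * P n j q)
      = if h : (i : ℕ) < n then (1/2) * P n ⟨(i : ℕ) + n, by have := i.isLt; omega⟩ q
        else -(1/2) * P n ⟨(i : ℕ) - n, by have := i.isLt; omega⟩ q :=
    fun i => sum_la_right n i (fun j => P n j q)
  simp only [key]
  rw [sum_pairs]
  refine Finset.sum_eq_zero fun i _ => ?_
  have hlt : (i : ℕ) < 2*n := by have := i.isLt; omega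
  rw [dif_pos i.isLt, dif_neg (by simp)]
  have he : (⟨(i : ℕ) + n - n, by omega⟩ : Fin (2*n)) = ⟨(i : ℕ), hlt⟩ := Fin.ext (by simp)
  rw [he]
  ring

lemma sum_delta (q : Fin (2*n+1) → ℝ) (i : Fin (2*n)) :
    ∑ j : Fin (2*n), (if i = j then S n q else 0) * (P n i q * P n j q)
      = S n q * (P n i q * P n i q) := by
  rw [Finset.sum_eq_single i]
  · rw [if_pos rfl]
  · intro b _ hb
    rw [if_neg (fun hh => hb hh.symm), zero_mul]
  · intro hk'
    exact absurd (Finset.mem_univ i) hk'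

lemma dsum (c : ℝ) (f g : Fin (2*n) → ℝ) :
    ∑ i : Fin (2*n), ∑ j : Fin (2*n), c * (f i * g j)
      = c * ((∑ i : Fin (2*n), f i) * (∑ j : Fin (2*n), g j)) := by
  rw [Finset.sum_mul_sum, Finset.mul_sum]
  exact Finset.sum_congr rfl fun i _ => by rw [Finset.mul_sum]

lemma sum_xP (q : Fin (2*n+1) → ℝ) :
    ∑ i : Fin (2*n), q (emb n i) * P n i q = S n q * S n q := by
  have e : ∀ i : Fin (2*n), q (emb n i) * P n i q
      = S n q * (q (emb n i) * q (emb n i)) + 8 * T n q * (q (emb n i) * A n i q) :=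
    fun i => by unfold P; ring
  rw [Finset.sum_congr rfl fun i _ => e i, Finset.sum_add_distrib,
    ← Finset.mul_sum, ← Finset.mul_sum, sum_xA, sum_sq]
  ring

lemma sum_AP (q : Fin (2*n+1) → ℝ) :
    ∑ i : Fin (2*n), A n i q * P n i q = 2 * T n q * S n q := by
  have e : ∀ i : Fin (2*n), A n i q * P n i q
      = S n q * (q (emb n i) * A n i q) + 8 * T n q * (A n i q * A n i q) :=
    fun i => by unfold P; ring
  rw [Finset.sum_congr rfl fun i _ => e i, Finset.sum_add_distrib,
    ← Finset.mul_sum, ← Finset.mul_sum, sum_xA, sum_AA, sum_sq]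
  ring

lemma sum_PP (q : Fin (2*n+1) → ℝ) :
    ∑ i : Fin (2*n), P n i q * P n i q = S n q * U n q := by
  have e : ∀ i : Fin (2*n), P n i q * P n i q
      = S n q * (q (emb n i) * P n i q) + 8 * T n q * (A n i q * P n i q) :=
    fun i => by unfold P; ring
  rw [Finset.sum_congr rfl fun i _ => e i, Finset.sum_add_distrib,
    ← Finset.mul_sum, ← Finset.mul_sum, sum_xP, sum_AP]
  unfold U
  ring


lemma hpow (q : Fin (2*n+1) → ℝ) (hu : 0 < U n q) :
    U n q ^ (-(7/4) : ℝ) * U n q ^ (-(3/4) : ℝ) * U n q ^ (-(3/4) : ℝ) * U n q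
      = U n q ^ (-(3/4) : ℝ) * U n q ^ (-(3/4) : ℝ) * U n q ^ (-(3/4) : ℝ) := by
  have e : ∀ a b : ℝ, U n q ^ a * U n q ^ b = U n q ^ (a + b) :=
    fun a b => (Real.rpow_add hu a b).symm
  rw [e, e, ← Real.rpow_add_one (ne_of_gt hu), e, e]
  norm_num

lemma final_alg (u3 u7 S T U : ℝ) (h1 : u7 * u3 * u3 * U = u3 * u3 * u3)
    (h2 : U = S^2 + 16*T^2) :
    (-3*u7*u3*u3) * ((S*U) * (S*U)) + (2*u3*u3*u3) * ((S*S) * (S*S))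
      + (u3*u3*u3) * (S * (S*U)) + 0 + (8*u3*u3*u3) * ((2*T*S) * (2*T*S)) = 0 := by
  subst h2
  linear_combination (-3*S^2*(S^2+16*T^2)) * h1

lemma main (q : Fin (2*n+1) → ℝ) (hu : 0 < U n q) :
    ∑ i : Fin (2*n), ∑ j : Fin (2*n),
      Xh n i (Xh n j (rhoH n)) q * Xh n i (rhoH n) q * Xh n j (rhoH n) q = 0 := by
  have hne : U n q ≠ 0 := ne_of_gt hu
  have key : ∀ i j : Fin (2*n),
      Xh n i (Xh n j (rhoH n)) q * Xh n i (rhoH n) q * Xh n j (rhoH n) q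
        = (-3 * U n q ^ (-(7/4) : ℝ) * U n q ^ (-(3/4) : ℝ) * U n q ^ (-(3/4) : ℝ))
            * ((P n i q * P n i q) * (P n j q * P n j q))
          + (2 * U n q ^ (-(3/4) : ℝ) * U n q ^ (-(3/4) : ℝ) * U n q ^ (-(3/4) : ℝ))
            * ((q (emb n i) * P n i q) * (q (emb n j) * P n j q))
          + (U n q ^ (-(3/4) : ℝ) * U n q ^ (-(3/4) : ℝ) * U n q ^ (-(3/4) : ℝ))
            * ((if i = j then S n q else 0) * (P n i q * P n j q))
          + (8 * T n q * U n q ^ (-(3/4) : ℝ) * U n q ^ (-(3/4) : ℝ) * U n q ^ (-(3/4) : ℝ))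
            * ((la n i j * P n j q) * P n i q)
          + (8 * U n q ^ (-(3/4) : ℝ) * U n q ^ (-(3/4) : ℝ) * U n q ^ (-(3/4) : ℝ))
            * ((A n i q * P n i q) * (A n j q * P n j q)) := by
    intro i j
    rw [Xh_Xh_rho n i j q hu, Xh_G n i j q hne, Xh_rho n i q hne, Xh_rho n j q hne]
    unfold G
    ring
  simp only [key]
  simp only [Finset.sum_add_distrib]
  have h1 := dsum n (-3 * U n q ^ (-(7/4) : ℝ) * U n q ^ (-(3/4) : ℝ) * U n q ^ (-(3/4) : ℝ))
    (fun i => P n i q * P n i q) (fun j => P n j q * P n j q)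
  have h2 := dsum n (2 * U n q ^ (-(3/4) : ℝ) * U n q ^ (-(3/4) : ℝ) * U n q ^ (-(3/4) : ℝ))
    (fun i => q (emb n i) * P n i q) (fun j => q (emb n j) * P n j q)
  have h5 := dsum n (8 * U n q ^ (-(3/4) : ℝ) * U n q ^ (-(3/4) : ℝ) * U n q ^ (-(3/4) : ℝ))
    (fun i => A n i q * P n i q) (fun j => A n j q * P n j q)
  have h3 : ∑ i : Fin (2*n), ∑ j : Fin (2*n),
      (U n q ^ (-(3/4) : ℝ) * U n q ^ (-(3/4) : ℝ) * U n q ^ (-(3/4) : ℝ))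
        * ((if i = j then S n q else 0) * (P n i q * P n j q))
      = (U n q ^ (-(3/4) : ℝ) * U n q ^ (-(3/4) : ℝ) * U n q ^ (-(3/4) : ℝ))
        * (S n q * (S n q * U n q)) := by
    have e1 : ∀ i : Fin (2*n), ∑ j : Fin (2*n),
        (U n q ^ (-(3/4) : ℝ) * U n q ^ (-(3/4) : ℝ) * U n q ^ (-(3/4) : ℝ))
          * ((if i = j then S n q else 0) * (P n i q * P n j q))
        = (U n q ^ (-(3/4) : ℝ) * U n q ^ (-(3/4) : ℝ) * U n q ^ (-(3/4) : ℝ))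
          * (S n q * (P n i q * P n i q)) := fun i => by
      rw [← Finset.mul_sum, sum_delta]
    simp only [e1]
    rw [← Finset.mul_sum, ← Finset.mul_sum, sum_PP]
  have h4 : ∑ i : Fin (2*n), ∑ j : Fin (2*n),
      (8 * T n q * U n q ^ (-(3/4) : ℝ) * U n q ^ (-(3/4) : ℝ) * U n q ^ (-(3/4) : ℝ))
        * ((la n i j * P n j q) * P n i q) = 0 := by
    have e1 : ∀ i : Fin (2*n), ∑ j : Fin (2*n),
        (8 * T n q * U n q ^ (-(3/4) : ℝ) * U n q ^ (-(3/4) : ℝ) * U n q ^ (-(3/4) : ℝ))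
          * ((la n i j * P n j q) * P n i q)
        = (8 * T n q * U n q ^ (-(3/4) : ℝ) * U n q ^ (-(3/4) : ℝ) * U n q ^ (-(3/4) : ℝ))
          * ((∑ j : Fin (2*n), la n i j * P n j q) * P n i q) := fun i => by
      rw [← Finset.mul_sum, ← Finset.sum_mul]
    simp only [e1]
    rw [← Finset.mul_sum, sum_sum_la, mul_zero]
  rw [h1, h2, h3, h4, h5, sum_PP, sum_xP, sum_AP]
  have halg := final_alg (U n q ^ (-(3/4) : ℝ)) (U n q ^ (-(7/4) : ℝ))
    (S n q) (T n q) (U n q) (hpow n q hu) (by unfold U; ring)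
  linear_combination halg

lemma Upos (q : Fin (2*n+1) → ℝ) (hq0 : q ≠ 0) : 0 < U n q := by
  have h0 : 0 ≤ U n q := by unfold U; positivity
  rcases h0.lt_or_eq with h | h
  · exact h
  exfalso
  have h' : S n q ^ 2 + 16 * T n q ^ 2 = 0 := by
    have := h.symm
    unfold U at this
    exact this
  have hST : S n q = 0 ∧ T n q = 0 := by
    constructor <;> nlinarith [sq_nonneg (S n q), sq_nonneg (T n q)]
  have hx : ∀ i : Fin (2*n), q (emb n i) = 0 := by
    intro i
    have h1 : ∑ j : Fin (2*n), (q (emb n j))^2 = 0 := hST.1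
    have h2 := (Finset.sum_eq_zero_iff_of_nonneg (fun j _ => sq_nonneg (q (emb n j)))).mp h1
      i (Finset.mem_univ i)
    exact pow_eq_zero_iff (two_ne_zero) |>.mp h2
  apply hq0
  funext k
  show q k = 0
  by_cases hk : (k : ℕ) < 2*n
  · have hkk : k = emb n ⟨(k : ℕ), hk⟩ := Fin.ext rfl
    rw [hkk]
    exact hx _
  · have hkk : k = tI n := Fin.ext (show (k : ℕ) = 2*n by have := k.isLt; omega)
    rw [hkk]
    exact hST.2

end HeisAux

theorem heisenberg_gauge_infinite_harmonic (n : ℕ) (hn : 1 ≤ n) :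
    ∀ q : Fin (2*n+1) → ℝ, q ≠ 0 →
      ∑ i : Fin (2*n), ∑ j : Fin (2*n),
        Xh n i (Xh n j (rhoH n)) q * Xh n i (rhoH n) q * Xh n j (rhoH n) q = 0 :=
  fun q hq0 => HeisAux.main n q (HeisAux.Upos n q hq0)
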